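/- Let A be a real 2n×2n matrix, N a real 2n×2n matrix, and γ : ℝ^{2n} → ℂ continuous. Define M_t = ∫_0^t (exp(τA))ᵀ · N · exp(τA) dτ and φ_t(ξ) = exp(∫_0^t γ(exp(τA)·ξ) dτ), and for each t ≥ 0 define the transform T̃_t on functions f : ℝ^{2n} → ℂ by (T̃_t f)(ξ) = f(exp(tA)·ξ) · exp(−(1/2)·ξᵀM_tξ) · φ_t(ξ). Then T̃_0 is the identity and T̃_s(T̃_t f) = T̃_{s+t} f for all s, t ≥ 0 and all f : ℝ^{2n} → ℂ. -/

import Mathlib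

noncomputable section
open Matrix
open scoped ComplexOrder

/-- `Mmat d A N t = ∫_0^t (exp(τA))ᵀ · N · exp(τA) dτ` (entrywise integral). -/
def Mmat (d : ℕ) (A N : Matrix (Fin d) (Fin d) ℝ) (t : ℝ) : Matrix (Fin d) (Fin d) ℝ :=
  Matrix.of fun i j =>
    ∫ τ in (0:ℝ)..t, ((NormedSpace.exp (τ • A))ᵀ * N * NormedSpace.exp (τ • A)) i j
/-- `phiFun d A γ t ξ = exp(∫_0^t γ(exp(τA)·ξ) dτ)`. -/
def phiFun (d : ℕ) (A : Matrix (Fin d) (Fin d) ℝ) (γ : (Fin d → ℝ) → ℂ) (t : ℝ)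
    (ξ : Fin d → ℝ) : ℂ :=
  Complex.exp (∫ τ in (0:ℝ)..t, γ ((NormedSpace.exp (τ • A)).mulVec ξ))
/-- The twisted convolution transform `T̃(φ,M,A)` acting on functions `f : ℝ^d → ℂ`:
`(T̃(φ,M,A) f)(ξ) = f(Aξ) · exp(-(1/2) ξᵀMξ) · φ(ξ)`. -/
def twistedTransform {d : ℕ} (φ : (Fin d → ℝ) → ℂ) (M A : Matrix (Fin d) (Fin d) ℝ)
    (f : (Fin d → ℝ) → ℂ) : (Fin d → ℝ) → ℂ :=
  fun ξ => f (A.mulVec ξ) * Complex.exp (-(1/2 : ℂ) * ((ξ ⬝ᵥ M.mulVec ξ : ℝ) : ℂ)) * φ ξ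

namespace TwistedAux

variable {d : ℕ}

/-- Continuity of `τ ↦ exp (τ • A)`. -/
lemma expE_continuous (A : Matrix (Fin d) (Fin d) ℝ) :
    Continuous fun τ : ℝ => NormedSpace.exp (τ • A) := by
  letI : SeminormedRing (Matrix (Fin d) (Fin d) ℝ) := Matrix.linftyOpSemiNormedRing
  letI : NormedRing (Matrix (Fin d) (Fin d) ℝ) := Matrix.linftyOpNormedRing
  letI : NormedAlgebra ℝ (Matrix (Fin d) (Fin d) ℝ) := Matrix.linftyOpNormedAlgebra
  letI : NormedAlgebra ℚ (Matrix (Fin d) (Fin d) ℝ) := Matrix.linftyOpNormedAlgebra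
  letI : CompleteSpace (Matrix (Fin d) (Fin d) ℝ) :=
    inferInstanceAs (CompleteSpace (Fin d → Fin d → ℝ))
  have h1 : Continuous (NormedSpace.exp : Matrix (Fin d) (Fin d) ℝ → _) :=
    NormedSpace.exp_continuous
  exact h1.comp (continuous_id.smul continuous_const)

lemma E_add (A : Matrix (Fin d) (Fin d) ℝ) (s t : ℝ) :
    NormedSpace.exp ((s + t) • A) =
      NormedSpace.exp (t • A) * NormedSpace.exp (s • A) := by
  rw [add_comm s t, add_smul]
  exact Matrix.exp_add_of_commute (𝔸 := ℝ) _ _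
    (((Commute.refl A).smul_left t).smul_right s)

lemma mulVec_continuous (A : Matrix (Fin d) (Fin d) ℝ) (ξ : Fin d → ℝ) :
    Continuous fun τ : ℝ => (NormedSpace.exp (τ • A)).mulVec ξ := by
  apply continuous_pi
  intro i
  simp only [Matrix.mulVec, dotProduct]
  exact continuous_finset_sum _ fun j _ =>
    (((continuous_apply j).comp ((continuous_apply i).comp (expE_continuous A))).mul
      continuous_const)

/-- Splitting of interval integrals: `∫_0^{s+t} F = ∫_0^s F + ∫_0^t F(s+·)`. -/
lemma split {E : Type*} [NormedAddCommGroup E] [NormedSpace ℝ E]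
    (F : ℝ → E) (hF : Continuous F) (s t : ℝ) :
    ∫ τ in (0:ℝ)..(s + t), F τ =
      (∫ τ in (0:ℝ)..s, F τ) + ∫ τ in (0:ℝ)..t, F (s + τ) := by
  rw [← intervalIntegral.integral_add_adjacent_intervals
    (hF.intervalIntegrable 0 s) (hF.intervalIntegrable s (s + t))]
  congr 1
  rw [intervalIntegral.integral_comp_add_left (fun x => F x) s]
  norm_num

lemma quad_eq (A N : Matrix (Fin d) (Fin d) ℝ) (t : ℝ) (ξ : Fin d → ℝ) :
    ξ ⬝ᵥ (Mmat d A N t).mulVec ξ =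
      ∫ τ in (0:ℝ)..t,
        ((NormedSpace.exp (τ • A)).mulVec ξ) ⬝ᵥ
          N.mulVec ((NormedSpace.exp (τ • A)).mulVec ξ) := by
  have hg : ∀ i j : Fin d, Continuous fun τ : ℝ =>
      ((NormedSpace.exp (τ • A))ᵀ * N * NormedSpace.exp (τ • A)) i j := by
    intro i j
    have : Continuous fun τ : ℝ =>
        (NormedSpace.exp (τ • A))ᵀ * N * NormedSpace.exp (τ • A) :=
      (((expE_continuous A).matrix_transpose.matrix_mul continuous_const).matrix_mul
        (expE_continuous A))
    exact (continuous_apply j).comp ((continuous_apply i).comp this)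
  have hrw : ∀ τ : ℝ,
      ((NormedSpace.exp (τ • A)).mulVec ξ) ⬝ᵥ
          N.mulVec ((NormedSpace.exp (τ • A)).mulVec ξ) =
      ∑ i, ∑ j, ξ i *
        (((NormedSpace.exp (τ • A))ᵀ * N * NormedSpace.exp (τ • A)) i j * ξ j) := by
    intro τ
    have : ((NormedSpace.exp (τ • A)).mulVec ξ) ⬝ᵥ
        N.mulVec ((NormedSpace.exp (τ • A)).mulVec ξ) =
        ξ ⬝ᵥ ((NormedSpace.exp (τ • A))ᵀ * N * NormedSpace.exp (τ • A)).mulVec ξ := by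
      conv_rhs => rw [← Matrix.mulVec_mulVec, ← Matrix.mulVec_mulVec,
        dotProduct_mulVec, Matrix.vecMul_transpose]
    rw [this]
    simp only [dotProduct, Matrix.mulVec, Finset.mul_sum]
  calc ξ ⬝ᵥ (Mmat d A N t).mulVec ξ
      = ∑ i, ∑ j, ξ i * ((Mmat d A N t) i j * ξ j) := by
        simp only [dotProduct, Matrix.mulVec, Finset.mul_sum]
    _ = ∑ i, ∑ j, ∫ τ in (0:ℝ)..t, ξ i *
          (((NormedSpace.exp (τ • A))ᵀ * N * NormedSpace.exp (τ • A)) i j * ξ j) := by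
        refine Finset.sum_congr rfl fun i _ => Finset.sum_congr rfl fun j _ => ?_
        rw [Mmat, Matrix.of_apply, ← intervalIntegral.integral_mul_const,
          ← intervalIntegral.integral_const_mul]
    _ = ∫ τ in (0:ℝ)..t, ∑ i, ∑ j, ξ i *
          (((NormedSpace.exp (τ • A))ᵀ * N * NormedSpace.exp (τ • A)) i j * ξ j) := by
        rw [intervalIntegral.integral_finset_sum]
        · refine Finset.sum_congr rfl fun i _ => ?_
          rw [intervalIntegral.integral_finset_sum]
          intro j _
          exact ((continuous_const.mul ((hg i j).mul continuous_const)).intervalIntegrable _ _)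
        · intro i _
          exact ((continuous_finset_sum _ fun j _ =>
            continuous_const.mul ((hg i j).mul continuous_const)).intervalIntegrable _ _)
    _ = _ := by
        refine (intervalIntegral.integral_congr fun τ _ => ?_).symm
        exact hrw τ

end TwistedAux

open TwistedAux

/-- The twisted convolution transforms `T̃_t = T̃(φ_t, M_t, exp(tA))` with
`M_t = ∫_0^t (exp(τA))ᵀ N exp(τA) dτ` and `φ_t(ξ) = exp(∫_0^t γ(exp(τA)ξ) dτ)` form a
one-parameter semigroup: `T̃_0 = id` and `T̃_s ∘ T̃_t = T̃_{s+t}`. -/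
theorem twistedTransform_semigroup (n : ℕ)
    (A N : Matrix (Fin (2*n)) (Fin (2*n)) ℝ)
    (γ : (Fin (2*n) → ℝ) → ℂ) (hγ : Continuous γ) :
    (∀ f : (Fin (2*n) → ℝ) → ℂ,
      twistedTransform (phiFun (2*n) A γ 0) (Mmat (2*n) A N 0)
        (NormedSpace.exp ((0:ℝ) • A)) f = f) ∧
    (∀ s t : ℝ, 0 ≤ s → 0 ≤ t → ∀ f : (Fin (2*n) → ℝ) → ℂ,
      twistedTransform (phiFun (2*n) A γ s) (Mmat (2*n) A N s)
          (NormedSpace.exp (s • A))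
        (twistedTransform (phiFun (2*n) A γ t) (Mmat (2*n) A N t)
          (NormedSpace.exp (t • A)) f) =
      twistedTransform (phiFun (2*n) A γ (s + t)) (Mmat (2*n) A N (s + t))
        (NormedSpace.exp ((s + t) • A)) f) := by
  constructor
  · intro f
    funext ξ
    have h0 : NormedSpace.exp ((0:ℝ) • A) = 1 := by
      rw [zero_smul]; exact NormedSpace.exp_zero
    have hM : Mmat (2*n) A N 0 = 0 := by
      ext i j; simp [Mmat]
    simp [twistedTransform, h0, hM, phiFun]
  · intro s t _ _ f
    funext ξ
    set Es := NormedSpace.exp (s • A) with hEs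
    -- quadratic form splitting
    have hq : (ξ ⬝ᵥ (Mmat (2*n) A N (s+t)).mulVec ξ) =
        (ξ ⬝ᵥ (Mmat (2*n) A N s).mulVec ξ) +
        ((Es.mulVec ξ) ⬝ᵥ (Mmat (2*n) A N t).mulVec (Es.mulVec ξ)) := by
      rw [quad_eq, quad_eq, quad_eq]
      have hF : Continuous fun τ : ℝ =>
          ((NormedSpace.exp (τ • A)).mulVec ξ) ⬝ᵥ
            N.mulVec ((NormedSpace.exp (τ • A)).mulVec ξ) := by
        have hv := mulVec_continuous A ξ
        have hNv : Continuous fun τ : ℝ =>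
            N.mulVec ((NormedSpace.exp (τ • A)).mulVec ξ) := by
          apply continuous_pi
          intro i
          simp only [Matrix.mulVec, dotProduct]
          exact continuous_finset_sum _ fun j _ =>
            continuous_const.mul ((continuous_apply j).comp hv)
        exact continuous_finset_sum _ fun i _ =>
          ((continuous_apply i).comp hv).mul ((continuous_apply i).comp hNv)
      rw [split _ hF s t]
      congr 1
      refine intervalIntegral.integral_congr fun τ _ => ?_
      rw [E_add, ← Matrix.mulVec_mulVec]
    -- phi splitting
    have hφ : phiFun (2*n) A γ (s+t) ξ =
        phiFun (2*n) A γ s ξ * phiFun (2*n) A γ t (Es.mulVec ξ) := by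
      rw [phiFun, phiFun, phiFun, ← Complex.exp_add]
      congr 1
      have hF : Continuous fun τ : ℝ => γ ((NormedSpace.exp (τ • A)).mulVec ξ) :=
        hγ.comp (mulVec_continuous A ξ)
      rw [split _ hF s t]
      congr 1
      refine intervalIntegral.integral_congr fun τ _ => ?_
      rw [E_add, ← Matrix.mulVec_mulVec]
    have hE : (NormedSpace.exp (t • A)).mulVec (Es.mulVec ξ) =
        (NormedSpace.exp ((s + t) • A)).mulVec ξ := by
      rw [Matrix.mulVec_mulVec, ← E_add]
    simp only [twistedTransform, hE, hq, hφ]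
    push_cast
    rw [mul_add, Complex.exp_add]
    ring
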